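/- Let k be a field of characteristic p > 0 and let m, r be natural numbers. Every operation θ from H^{m+1,m} to H^{r,r} over k is constant: there exists c ∈ H^{r,r}(k) such that θ_E(x) = c_E for every field extension E of k and every x ∈ H^{m+1,m}(E). In particular every normalized operation from H^{m+1,m} to H^{r,r} is zero. -/

import Mathlib

set_option linter.unnecessarySimpa false
set_option maxHeartbeats 1000000
noncomputable section
open KaehlerDifferential ExteriorAlgebra

abbrev EA (F : Type) [Field F] : Type := ExteriorAlgebra F (Ω[F⁄ℤ])

section MapAux
variable (F F' : Type) [Field F] [Field F'] [Algebra F F']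

/-- Functoriality of `Ω¹_{·/ℤ}`. -/
def mOm1 : Ω[F⁄ℤ] →ₗ[F] Ω[F'⁄ℤ] := KaehlerDifferential.map ℤ ℤ F F'

/-- Functoriality of the ambient algebra of differential forms. -/
def mapEAA : EA F →+* EA F' :=
  (ExteriorAlgebra.lift F
    ⟨(LinearMap.restrictScalars F (ExteriorAlgebra.ι F')).comp (mOm1 F F'),
     fun m => by simp⟩).toRingHom

lemma mapEAA_ι (w : Ω[F⁄ℤ]) :
    mapEAA F F' (ExteriorAlgebra.ι F w) = ExteriorAlgebra.ι F' (mOm1 F F' w) := by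
  simpa [mapEAA] using ExteriorAlgebra.lift_ι_apply F _ _ w

lemma mapEAA_smul (a : F) (x : EA F) :
    mapEAA F F' (a • x) = algebraMap F F' a • mapEAA F F' x := by
  have h : mapEAA F F' (a • x) = a • mapEAA F F' x := by
    have h2 := (ExteriorAlgebra.lift F
      ⟨(LinearMap.restrictScalars F (ExteriorAlgebra.ι F')).comp (mOm1 F F'),
       fun m => by simp⟩).toLinearMap.map_smul a x
    exact h2
  rw [h]
  exact (algebraMap_smul F' a (mapEAA F F' x)).symm

lemma mapEAA_ιMulti (n : ℕ) (v : Fin n → Ω[F⁄ℤ]) :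
    mapEAA F F' (ExteriorAlgebra.ιMulti F n v)
      = ExteriorAlgebra.ιMulti F' n fun i => mOm1 F F' (v i) := by
  rw [ExteriorAlgebra.ιMulti_apply, ExteriorAlgebra.ιMulti_apply, map_list_prod]
  congr 1
  simp [List.map_ofFn, Function.comp_def, mapEAA_ι]
end MapAux

/-- The map on ambient differential-form algebras induced by a field homomorphism. -/
def mapEA {F F' : Type} [Field F] [Field F'] (φ : F →+* F') : EA F →+* EA F' :=
  letI : Algebra F F' := φ.toAlgebra
  mapEAA F F'

def dlogF {F : Type} [Field F] (b : Fˣ) : Ω[F⁄ℤ] :=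
  ((b⁻¹ : Fˣ) : F) • KaehlerDifferential.D ℤ F (b : F)

def logFormEA {F : Type} [Field F] {n : ℕ} (a : F) (b : Fin n → Fˣ) : EA F :=
  a • ExteriorAlgebra.ιMulti F n fun i => dlogF (b i)

def dWedge {F : Type} [Field F] {n : ℕ} (a : Fin n → F) : EA F :=
  ExteriorAlgebra.ιMulti F n fun i => KaehlerDifferential.D ℤ F (a i)

def OmegaS (F : Type) [Field F] (m : ℤ) : Submodule F (EA F) :=
  if 0 ≤ m then ⋀[F]^(m.toNat) (Ω[F⁄ℤ]) else ⊥

section MapAux2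
variable (F F' : Type) [Field F] [Field F'] [Algebra F F']

lemma mapEAA_pow_mem (n : ℕ) (x : EA F) (hx : x ∈ ⋀[F]^n (Ω[F⁄ℤ])) :
    mapEAA F F' x ∈ ⋀[F']^n (Ω[F'⁄ℤ]) := by
  rw [← ExteriorAlgebra.ιMulti_span_fixedDegree] at hx
  induction hx using Submodule.span_induction with
  | mem x h =>
      obtain ⟨v, rfl⟩ := h
      rw [mapEAA_ιMulti]
      exact ExteriorAlgebra.ιMulti_range F' n (Set.mem_range_self _)
  | zero => simp only [map_zero]; exact Submodule.zero_mem _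
  | add x y _ _ hx hy => rw [map_add]; exact Submodule.add_mem _ hx hy
  | smul a x _ hx =>
      rw [mapEAA_smul]
      exact Submodule.smul_mem _ _ hx

lemma mapEAA_OmegaS_mem (m : ℤ) (x : EA F) (hx : x ∈ OmegaS F m) :
    mapEAA F F' x ∈ OmegaS F' m := by
  by_cases h : 0 ≤ m
  · simp only [OmegaS, if_pos h] at hx ⊢
    exact mapEAA_pow_mem F F' _ x hx
  · simp only [OmegaS, if_neg h, Submodule.mem_bot] at hx ⊢
    rw [hx, map_zero]
end MapAux2

lemma OmegaS_cast {F : Type} [Field F] {m₁ m₂ : ℤ} (h : m₁ = m₂) {x : EA F}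
    (hx : x ∈ OmegaS F m₁) : x ∈ OmegaS F m₂ := h ▸ hx

lemma ιMulti_mem {F : Type} [Field F] (n : ℕ) (v : Fin n → Ω[F⁄ℤ]) :
    ExteriorAlgebra.ιMulti F n v ∈ OmegaS F (n : ℤ) := by
  have h := ExteriorAlgebra.ιMulti_range F n (M := Ω[F⁄ℤ]) (Set.mem_range_self v)
  simpa [OmegaS] using h

lemma logFormEA_mem {F : Type} [Field F] {n : ℕ} (a : F) (b : Fin n → Fˣ) :
    logFormEA a b ∈ OmegaS F (n : ℤ) :=
  Submodule.smul_mem _ a (ιMulti_mem n _)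

lemma dWedge_mem {F : Type} [Field F] {n : ℕ} (a : Fin n → F) :
    dWedge a ∈ OmegaS F (n : ℤ) := ιMulti_mem n _

lemma OmegaS_mul_mem {F : Type} [Field F] {m₁ m₂ : ℤ} {x y : EA F}
    (hx : x ∈ OmegaS F m₁) (hy : y ∈ OmegaS F m₂) : x * y ∈ OmegaS F (m₁ + m₂) := by
  by_cases h1 : 0 ≤ m₁
  · by_cases h2 : 0 ≤ m₂
    · have hx' : x ∈ ⋀[F]^(m₁.toNat) (Ω[F⁄ℤ]) := by simpa [OmegaS, h1] using hx
      have hy' : y ∈ ⋀[F]^(m₂.toNat) (Ω[F⁄ℤ]) := by simpa [OmegaS, h2] using hy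
      have hm : x * y ∈ ⋀[F]^(m₁.toNat + m₂.toNat) (Ω[F⁄ℤ]) := by
        rw [exteriorPower, pow_add]
        exact Submodule.mul_mem_mul hx' hy'
      have hnat : (m₁ + m₂).toNat = m₁.toNat + m₂.toNat := by omega
      simp only [OmegaS, if_pos (by omega : (0:ℤ) ≤ m₁ + m₂), hnat]
      exact hm
    · have : y = 0 := by simpa [OmegaS, h2] using hy
      simp only [this, mul_zero]
      exact Submodule.zero_mem _
  · have : x = 0 := by simpa [OmegaS, h1] using hx
    simp only [this, zero_mul]
    exact Submodule.zero_mem _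

/-- The subgroup of relations defining `H^{m+1,m}`: exact forms (the image of `d`)
and Artin--Schreier forms `(a^p - a)·dlog b₁ ∧ ⋯ ∧ dlog b_m`. -/
def relSet (p : ℕ) (F : Type) [Field F] (m : ℤ) : Set ↥(OmegaS F m) :=
  {x | (1 ≤ m ∧ ∃ a : Fin m.toNat → F, (x : EA F) = dWedge a) ∨
    (0 ≤ m ∧ ∃ (a : F) (b : Fin m.toNat → Fˣ), (x : EA F) = logFormEA (a ^ p - a) b)}

def Hsub (p : ℕ) (F : Type) [Field F] (m : ℤ) : AddSubgroup ↥(OmegaS F m) :=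
  AddSubgroup.closure (relSet p F m)

/-- `H^{m+1,m}(F)`, the cokernel of `𝒫 : Ω^m_F → Ω^m_F/dΩ^{m-1}_F`, realized as the
quotient of `Ω^m_F` by the subgroup generated by exact forms and the image of `𝒫`. -/
def Hw (p : ℕ) (F : Type) [Field F] (m : ℤ) : Type := ↥(OmegaS F m) ⧸ Hsub p F m

instance (p : ℕ) (F : Type) [Field F] (m : ℤ) : AddCommGroup (Hw p F m) :=
  inferInstanceAs (AddCommGroup (↥(OmegaS F m) ⧸ Hsub p F m))

/-- The class in `H^{m+1,m}(F)` of a differential form. -/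
def mkHw (p : ℕ) {F : Type} [Field F] {m : ℤ} (x : EA F) (hx : x ∈ OmegaS F m) : Hw p F m :=
  QuotientAddGroup.mk (⟨x, hx⟩ : ↥(OmegaS F m))

/-- The symbol `[a, b₁, …, b_n}` in `H^{n+1,n}(F)`. -/
def symbHw (p : ℕ) {F : Type} [Field F] {n : ℕ} (a : F) (b : Fin n → Fˣ) : Hw p F (n : ℤ) :=
  mkHw p (logFormEA a b) (logFormEA_mem a b)

/-- `Ω^m_{log,F}`, i.e. `H^{m,m}(F)`, the subgroup of `Ω^m_F` generated by
logarithmic forms `dlog b₁ ∧ ⋯ ∧ dlog b_m`. -/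
def HMsub (F : Type) [Field F] (m : ℤ) : AddSubgroup ↥(OmegaS F m) :=
  AddSubgroup.closure {x | ∃ b : Fin m.toNat → Fˣ, (x : EA F) = logFormEA 1 b}

/-- `H^{1,1}(F) = F^*/(F^*)^p`. -/
def H11 (p : ℕ) (F : Type) [Field F] : Type :=
  Fˣ ⧸ Subgroup.closure {x : Fˣ | ∃ y : Fˣ, x = y ^ p}

instance (p : ℕ) (F : Type) [Field F] : CommGroup (H11 p F) :=
  inferInstanceAs (CommGroup (Fˣ ⧸ Subgroup.closure {x : Fˣ | ∃ y : Fˣ, x = y ^ p}))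

/-- The class `{b}` of a unit in `H^{1,1}(F)`. -/
def H11.mk (p : ℕ) {F : Type} [Field F] (b : Fˣ) : H11 p F := QuotientGroup.mk b

/-- `H^{1,0}(F) = F/{x^p - x}`. -/
def H10 (p : ℕ) (F : Type) [Field F] : Type :=
  F ⧸ AddSubgroup.closure {x : F | ∃ y : F, x = y ^ p - y}

instance (p : ℕ) (F : Type) [Field F] : AddCommGroup (H10 p F) :=
  inferInstanceAs (AddCommGroup (F ⧸ AddSubgroup.closure {x : F | ∃ y : F, x = y ^ p - y}))

/-- The class `[a]` of a field element in `H^{1,0}(F)`. -/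
def H10.mk (p : ℕ) {F : Type} [Field F] (a : F) : H10 p F := QuotientAddGroup.mk a

section MapAux3
variable (F F' : Type) [Field F] [Field F'] [Algebra F F']

lemma mOm1_D (a : F) :
    mOm1 F F' (KaehlerDifferential.D ℤ F a)
      = KaehlerDifferential.D ℤ F' (algebraMap F F' a) :=
  KaehlerDifferential.map_D ℤ ℤ F F' a

lemma mOm1_smul (a : F) (w : Ω[F⁄ℤ]) :
    mOm1 F F' (a • w) = algebraMap F F' a • mOm1 F F' w := by
  rw [map_smul]
  exact (algebraMap_smul F' a (mOm1 F F' w)).symm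

lemma mOm1_dlog (b : Fˣ) :
    mOm1 F F' (dlogF b) = dlogF (Units.map (algebraMap F F' : F →* F') b) := by
  rw [dlogF, mOm1_smul, mOm1_D, dlogF]
  rfl

def mapOmegaS (m : ℤ) : ↥(OmegaS F m) →+ ↥(OmegaS F' m) where
  toFun := fun x => ⟨mapEAA F F' x.val, mapEAA_OmegaS_mem F F' m x.val x.2⟩
  map_zero' := by apply Subtype.ext; simp
  map_add' := by intro x y; apply Subtype.ext; simp

lemma mapEAA_logFormEA {n : ℕ} (a : F) (b : Fin n → Fˣ) :
    mapEAA F F' (logFormEA a b)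
      = logFormEA (algebraMap F F' a) (fun i => Units.map (algebraMap F F' : F →* F') (b i)) := by
  rw [logFormEA, mapEAA_smul, mapEAA_ιMulti, logFormEA]
  have h : (fun i => mOm1 F F' (dlogF (b i)))
      = fun i => dlogF (Units.map (algebraMap F F' : F →* F') (b i)) :=
    funext fun i => mOm1_dlog F F' (b i)
  rw [h]

lemma mapEAA_dWedge {n : ℕ} (a : Fin n → F) :
    mapEAA F F' (dWedge a) = dWedge fun i => algebraMap F F' (a i) := by
  rw [dWedge, mapEAA_ιMulti, dWedge]
  have h : (fun i => mOm1 F F' (KaehlerDifferential.D ℤ F (a i)))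
      = fun i => KaehlerDifferential.D ℤ F' (algebraMap F F' (a i)) :=
    funext fun i => mOm1_D F F' (a i)
  rw [h]

lemma mapOmegaS_rel (p : ℕ) (m : ℤ) :
    Hsub p F m ≤ (Hsub p F' m).comap (mapOmegaS F F' m) := by
  rw [Hsub, AddSubgroup.closure_le]
  intro x hx
  rcases hx with ⟨hm, a, ha⟩ | ⟨hm, a, b, hab⟩
  · apply AddSubgroup.subset_closure
    left
    refine ⟨hm, fun i => algebraMap F F' (a i), ?_⟩
    show mapEAA F F' x.val = _
    rw [ha, mapEAA_dWedge]
  · apply AddSubgroup.subset_closure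
    right
    refine ⟨hm, algebraMap F F' a, fun i => Units.map (algebraMap F F' : F →* F') (b i), ?_⟩
    show mapEAA F F' x.val = _
    rw [hab, mapEAA_logFormEA, map_sub, map_pow]

def mapHw (p : ℕ) (m : ℤ) : Hw p F m →+ Hw p F' m :=
  QuotientAddGroup.map (Hsub p F m) (Hsub p F' m) (mapOmegaS F F' m) (mapOmegaS_rel F F' p m)

lemma mapOmegaS_HM (m : ℤ) (x : ↥(OmegaS F m)) (hx : x ∈ HMsub F m) :
    mapOmegaS F F' m x ∈ HMsub F' m := by
  induction hx using AddSubgroup.closure_induction with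
  | mem x h =>
      obtain ⟨b, hb⟩ := h
      apply AddSubgroup.subset_closure
      refine ⟨fun i => Units.map (algebraMap F F' : F →* F') (b i), ?_⟩
      show mapEAA F F' x.val = _
      rw [hb, mapEAA_logFormEA, map_one]
  | zero => simpa using AddSubgroup.zero_mem _
  | add x y _ _ hx hy => rw [map_add]; exact AddSubgroup.add_mem _ hx hy
  | neg x _ hx => rw [map_neg]; exact AddSubgroup.neg_mem _ hx

def mapHM (m : ℤ) : ↥(HMsub F m) →+ ↥(HMsub F' m) where
  toFun := fun x => ⟨mapOmegaS F F' m x.val, mapOmegaS_HM F F' m x.val x.2⟩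
  map_zero' := by apply Subtype.ext; simp
  map_add' := by intro x y; apply Subtype.ext; simp

end MapAux3

/-- The map induced by a field homomorphism on ambient differential forms. -/
def pushEA {F F' : Type} [Field F] [Field F'] (φ : F →+* F') : EA F →+* EA F' :=
  letI : Algebra F F' := φ.toAlgebra
  mapEAA F F'

/-- The map `Ω^m_F → Ω^m_{F'}` induced by a field homomorphism. -/
def pushOmegaS {F F' : Type} [Field F] [Field F'] (φ : F →+* F') (m : ℤ) :
    ↥(OmegaS F m) →+ ↥(OmegaS F' m) :=
  letI : Algebra F F' := φ.toAlgebra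
  mapOmegaS F F' m

/-- The map `H^{m+1,m}(F) → H^{m+1,m}(F')` induced by a field homomorphism. -/
def pushHw (p : ℕ) {F F' : Type} [Field F] [Field F'] (φ : F →+* F') (m : ℤ) :
    Hw p F m →+ Hw p F' m :=
  letI : Algebra F F' := φ.toAlgebra
  mapHw F F' p m

/-- The map `H^{m,m}(F) → H^{m,m}(F')` induced by a field homomorphism. -/
def pushHM {F F' : Type} [Field F] [Field F'] (φ : F →+* F') (m : ℤ) :
    ↥(HMsub F m) →+ ↥(HMsub F' m) :=
  letI : Algebra F F' := φ.toAlgebra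
  mapHM F F' m

/-- `dlog b₁ ∧ ⋯ ∧ dlog b_t`. -/
def dlogProd {F : Type} [Field F] (t : ℕ) (b : Fin t → Fˣ) : EA F :=
  ExteriorAlgebra.ιMulti F t fun i => dlogF (b i)

lemma dlogProd_mem {F : Type} [Field F] (t : ℕ) (b : Fin t → Fˣ) :
    dlogProd t b ∈ OmegaS F (t : ℤ) := ιMulti_mem t _

/-- The product `[a, b₁, …, b_t} · (class of ω)` in `H^{mt+1,mt}(F)`,
where `ω` is a differential form of degree `j` and `t + j = mt`. -/
def genHw (p : ℕ) {F : Type} [Field F] {t : ℕ} {j mt : ℤ} (h : (t : ℤ) + j = mt)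
    (a : F) (b : Fin t → Fˣ) (ω : EA F) (hω : ω ∈ OmegaS F j) : Hw p F mt :=
  mkHw p (a • (dlogProd t b * ω))
    (OmegaS_cast h (Submodule.smul_mem _ a (OmegaS_mul_mem (dlogProd_mem t b) hω)))

/-- The product `(class of ω)·{b₁}⋯{b_t}` in `H^{mt+1,mt}(F)`. -/
def mulSymbHw (p : ℕ) {F : Type} [Field F] {t : ℕ} {j mt : ℤ} (h : j + (t : ℤ) = mt)
    (ω : EA F) (hω : ω ∈ OmegaS F j) (b : Fin t → Fˣ) : Hw p F mt :=
  mkHw p (ω * dlogProd t b) (OmegaS_cast h (OmegaS_mul_mem hω (dlogProd_mem t b)))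

/-- The product `[a] · (class of ω)` in `H^{j+1,j}(F)`. -/
def smulHw (p : ℕ) {F : Type} [Field F] {j : ℤ} (a : F) (ω : EA F) (hω : ω ∈ OmegaS F j) :
    Hw p F j :=
  mkHw p (a • ω) (Submodule.smul_mem _ a hω)

set_option synthInstance.maxHeartbeats 400000
set_option linter.unusedSectionVars false

section StrictMonoAux

lemma strictMono_eq_of_image_eq {I : Type*} [LinearOrder I] {r : ℕ} {s t : Fin r → I}
    (hs : StrictMono s) (ht : StrictMono t)
    (h : Finset.image s Finset.univ = Finset.image t Finset.univ) : s = t := by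
  classical
  have hcard : (Finset.image s Finset.univ).card = r := by
    rw [Finset.card_image_of_injective _ hs.injective, Finset.card_univ, Fintype.card_fin]
  have h1 : s = (Finset.image s Finset.univ).orderEmbOfFin hcard :=
    Finset.orderEmbOfFin_unique hcard (fun x => Finset.mem_image_of_mem s (Finset.mem_univ x)) hs
  have h2 : t = (Finset.image s Finset.univ).orderEmbOfFin hcard :=
    Finset.orderEmbOfFin_unique hcard
      (fun x => h ▸ Finset.mem_image_of_mem t (Finset.mem_univ x)) ht
  rw [h1, h2]

end StrictMonoAux

/-- Multilinear maps send tuples of span-members into a submodule containing all values on tuples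
from the spanning set. -/
theorem multilinear_mem_span_aux {R M N : Type*} [CommRing R] [AddCommGroup M] [Module R M]
    [AddCommGroup N] [Module R N] {n : ℕ}
    (f : MultilinearMap R (fun _ : Fin n => M) N) (s : Set M) (GM : Submodule R N)
    (hs : ∀ w : Fin n → M, (∀ k, w k ∈ s) → f w ∈ GM) :
    ∀ v : Fin n → M, (∀ k, v k ∈ Submodule.span R s) → f v ∈ GM := by
  classical
  suffices H : ∀ j : ℕ, ∀ v : Fin n → M,
      (∀ k : Fin n, (k : ℕ) < j → v k ∈ Submodule.span R s) →
      (∀ k : Fin n, j ≤ (k : ℕ) → v k ∈ s) → f v ∈ GM by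
    intro v hv
    exact H n v (fun k _ => hv k) (fun k hk => absurd k.2 (by omega))
  intro j
  induction j with
  | zero => intro v _ h2; exact hs v fun k => h2 k (Nat.zero_le _)
  | succ j ih =>
    intro v h1 h2
    by_cases hj : j < n
    · set i : Fin n := ⟨j, hj⟩ with hi
      have hvi : v i ∈ Submodule.span R s := h1 i (by simp [hi])
      have key : ∀ y ∈ Submodule.span R s, f (Function.update v i y) ∈ GM := by
        intro y hy
        induction hy using Submodule.span_induction with
        | mem z hz =>
          apply ih
          · intro k hk
            rw [Function.update_of_ne (by rintro rfl; simp only [hi] at hk; omega)]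
            exact h1 k (by omega)
          · intro k hk
            rcases eq_or_ne k i with rfl | hne
            · simpa using hz
            · rw [Function.update_of_ne hne]
              exact h2 k (by
                rcases lt_or_ge (k : ℕ) (j+1) with h | h
                · exfalso; apply hne; apply Fin.ext; simp [hi]; omega
                · omega)
        | zero =>
          rw [f.map_coord_zero i (by simp)]
          exact GM.zero_mem
        | add y z _ _ hy hz =>
          rw [f.map_update_add]
          exact GM.add_mem hy hz
        | smul a y _ hy =>
          rw [f.map_update_smul]
          exact GM.smul_mem a hy
      have := key (v i) hvi
      rwa [Function.update_eq_self] at this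
    · apply ih
      · intro k _; exact h1 k (by omega)
      · intro k hk; exact absurd k.2 (by omega)

section Injectivity
variable {E E' : Type} [Field E] [Field E'] [Algebra E E']
variable {I : Type} [LinearOrder I] (e : Module.Basis I E (Ω[E⁄ℤ]))
  (ψ : I → (Ω[E'⁄ℤ] →ₗ[E'] E'))

/-- The wedge of basis vectors along a strictly monotone tuple of indices. -/
def monoWedge (r : ℕ) (s : {s : Fin r → I // StrictMono s}) : EA E :=
  ExteriorAlgebra.ιMulti E r fun k => e (s.1 k)

lemma mem_span_monoWedge (r : ℕ) (x : EA E) (hx : x ∈ ⋀[E]^r (Ω[E⁄ℤ])) :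
    x ∈ Submodule.span E (Set.range (monoWedge e r)) := by
  classical
  rw [← ExteriorAlgebra.ιMulti_span_fixedDegree] at hx
  refine Submodule.span_le.mpr ?_ hx
  rintro _ ⟨v, rfl⟩
  apply multilinear_mem_span_aux (ExteriorAlgebra.ιMulti E r).toMultilinearMap (Set.range e)
  · intro w hw
    choose g hg using hw
    have hwg : w = fun k => e (g k) := funext fun k => (hg k).symm
    rw [hwg]
    by_cases hinj : Function.Injective g
    · let T : Finset I := Finset.image g Finset.univ
      have hcard : T.card = r := by
        rw [Finset.card_image_of_injective _ hinj, Finset.card_univ, Fintype.card_fin]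
      let oi := T.orderIsoOfFin hcard
      let s0 : Fin r → I := fun k => (oi k : I)
      have hs0 : StrictMono s0 := fun a b hab => by
        exact Subtype.coe_lt_coe.mpr (oi.strictMono hab)
      let τ : Fin r → Fin r := fun k =>
        oi.symm ⟨g k, Finset.mem_image_of_mem g (Finset.mem_univ k)⟩
      have hτinj : Function.Injective τ := by
        intro a b hab
        apply hinj
        have h2 := congrArg oi hab
        rw [OrderIso.apply_symm_apply, OrderIso.apply_symm_apply] at h2
        exact Subtype.ext_iff.mp h2
      let σ : Equiv.Perm (Fin r) := Equiv.ofBijective τ (Finite.injective_iff_bijective.mp hτinj)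
      have hgs : ∀ k, g k = s0 (σ k) := fun k => by
        show g k = (oi (τ k) : I)
        rw [OrderIso.apply_symm_apply]
      have hfun : (fun k => e (g k)) = (fun k => e (s0 k)) ∘ σ := funext fun k => by
        simp only [Function.comp_apply, hgs k]
      show ExteriorAlgebra.ιMulti E r (fun k => e (g k)) ∈ _
      rw [hfun, AlternatingMap.map_perm, Units.smul_def]
      refine zsmul_mem ?_ _
      exact Submodule.subset_span ⟨⟨s0, hs0⟩, rfl⟩
    · rw [Function.not_injective_iff] at hinj
      obtain ⟨a, b, hab, hne⟩ := hinj
      show ExteriorAlgebra.ιMulti E r (fun k => e (g k)) ∈ _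
      rw [AlternatingMap.map_eq_zero_of_eq _ _ (by rw [hab]) hne]
      exact Submodule.zero_mem _
  · intro k
    rw [Module.Basis.span_eq]
    exact Submodule.mem_top

/-- The determinant functional dual to a wedge of basis vectors. -/
def dualWedge (r : ℕ) (t : Fin r → I) : EA E' →ₗ[E'] E' :=
  ExteriorAlgebra.liftAlternating
    (Pi.single r (Matrix.detRowAlternating.compLinearMap (LinearMap.pi fun k => ψ (t k))))

lemma dualWedge_apply (r : ℕ) (t : Fin r → I) (v : Fin r → Ω[E'⁄ℤ]) :
    dualWedge ψ r t (ExteriorAlgebra.ιMulti E' r v) =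
      Matrix.det (Matrix.of fun l k => ψ (t k) (v l)) := by
  rw [dualWedge, ExteriorAlgebra.liftAlternating_apply_ιMulti, Pi.single_eq_same]
  rfl

lemma dualWedge_eval (hψeq : ∀ i, ψ i (mOm1 E E' (e i)) = 1)
    (hψne : ∀ i j, i ≠ j → ψ i (mOm1 E E' (e j)) = 0)
    (r : ℕ) (s t : Fin r → I) (hs : StrictMono s) (ht : StrictMono t) :
    dualWedge ψ r t (ExteriorAlgebra.ιMulti E' r fun k => mOm1 E E' (e (s k))) =
      if s = t then 1 else 0 := by
  classical
  rw [dualWedge_apply]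
  by_cases hst : s = t
  · subst hst
    rw [if_pos rfl]
    have h1 : (Matrix.of fun l k => ψ (s k) (mOm1 E E' (e (s l))))
        = (1 : Matrix (Fin r) (Fin r) E') := by
      ext l k
      rw [Matrix.of_apply, Matrix.one_apply]
      by_cases h : l = k
      · subst h
        rw [if_pos rfl, hψeq]
      · rw [if_neg h, hψne _ _ (fun hc => h (hs.injective hc).symm)]
    rw [h1, Matrix.det_one]
  · rw [if_neg hst]
    have hrange : ¬(Finset.image s Finset.univ ⊆ Finset.image t Finset.univ) := by
      intro hsub
      refine hst (strictMono_eq_of_image_eq hs ht ?_)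
      refine Finset.eq_of_subset_of_card_le hsub ?_
      rw [Finset.card_image_of_injective _ ht.injective,
        Finset.card_image_of_injective _ hs.injective]
    rw [Finset.not_subset] at hrange
    obtain ⟨a, ha, hnt⟩ := hrange
    rw [Finset.mem_image] at ha
    obtain ⟨l, -, rfl⟩ := ha
    apply Matrix.det_eq_zero_of_row_eq_zero l
    intro k
    rw [Matrix.of_apply]
    exact hψne _ _ (fun hc => hnt (hc ▸ Finset.mem_image_of_mem t (Finset.mem_univ k)))

lemma mapEAA_injOn_power (hψeq : ∀ i, ψ i (mOm1 E E' (e i)) = 1)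
    (hψne : ∀ i j, i ≠ j → ψ i (mOm1 E E' (e j)) = 0)
    (r : ℕ) (x : EA E) (hx : x ∈ ⋀[E]^r (Ω[E⁄ℤ]))
    (h0 : mapEAA E E' x = 0) : x = 0 := by
  classical
  obtain ⟨c, hc⟩ := Finsupp.mem_span_range_iff_exists_finsupp.mp (mem_span_monoWedge e r x hx)
  have hzero : ∀ t : {s : Fin r → I // StrictMono s}, c t = 0 := by
    intro t
    have hmap : mapEAA E E' x = ∑ s ∈ c.support,
        algebraMap E E' (c s) • ExteriorAlgebra.ιMulti E' r (fun k => mOm1 E E' (e (s.1 k))) := by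
      rw [← hc, Finsupp.sum, map_sum]
      refine Finset.sum_congr rfl fun s _ => ?_
      rw [mapEAA_smul, monoWedge, mapEAA_ιMulti]
    have h2 : (0 : E') = ∑ s ∈ c.support,
        algebraMap E E' (c s) • (if s = t then (1 : E') else 0) := by
      calc (0 : E') = dualWedge ψ r t.1 (mapEAA E E' x) := by rw [h0, map_zero]
        _ = _ := by
          rw [hmap, map_sum]
          refine Finset.sum_congr rfl fun s _ => ?_
          rw [map_smul, dualWedge_eval e ψ hψeq hψne r s.1 t.1 s.2 t.2]
          congr 1
          by_cases h : s = t
          · rw [if_pos (by rw [h]), if_pos h]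
          · rw [if_neg (fun hc' => h (Subtype.ext hc')), if_neg h]
    rw [Finset.sum_congr rfl (fun s _ => by
      rw [smul_ite, smul_zero, smul_eq_mul, mul_one]), Finset.sum_ite_eq' c.support t
      (fun s => algebraMap E E' (c s))] at h2
    by_cases hts : t ∈ c.support
    · rw [if_pos hts] at h2
      exact (algebraMap E E').injective (by rw [map_zero]; exact h2.symm)
    · exact Finsupp.notMem_support_iff.mp hts
  have hc0 : c = 0 := Finsupp.ext hzero
  rw [← hc, hc0, Finsupp.sum_zero_index]

end Injectivity
open TrivSqZeroExt in
theorem exists_derivation_extension (K L : Type) [Field K] [Field L] [Algebra K L]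
    [Algebra.FormallySmooth K L] (D : Derivation ℤ K L) :
    ∃ D' : Derivation ℤ L L, ∀ a : K, D' (algebraMap K L a) = D a := by
  classical
  let B := TrivSqZeroExt L L
  let φ : K →+* B :=
  { toFun := fun a => inl (algebraMap K L a) + inr (D a)
    map_one' := by
      apply TrivSqZeroExt.ext
      · rw [fst_add, fst_inl, fst_inr, add_zero, map_one, fst_one]
      · rw [snd_add, snd_inl, snd_inr, zero_add, Derivation.map_one_eq_zero, snd_one]
    map_mul' := fun a b => by
      apply TrivSqZeroExt.ext
      · rw [fst_add, fst_inl, fst_inr, add_zero, fst_mul, fst_add, fst_inl, fst_inr, add_zero,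
          fst_add, fst_inl, fst_inr, add_zero, map_mul]
      · show snd (inl (algebraMap K L (a * b)) + inr (D (a * b))) =
            snd ((inl (algebraMap K L a) + inr (D a)) * (inl (algebraMap K L b) + inr (D b)))
        rw [snd_mul]
        simp only [Derivation.leibniz, op_smul_eq_smul]
        rw [fst_add, fst_inl, fst_inr, add_zero, fst_add, fst_inl, fst_inr, add_zero,
          snd_add, snd_inl, snd_inr, zero_add, snd_add, snd_inl, snd_inr, zero_add,
          algebraMap_smul, algebraMap_smul, snd_add, snd_inl, snd_inr, zero_add]
    map_zero' := by
      apply TrivSqZeroExt.ext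
      · rw [fst_add, fst_inl, fst_inr, add_zero, map_zero, fst_zero]
      · rw [snd_add, snd_inl, snd_inr, zero_add, map_zero, snd_zero]
    map_add' := fun a b => by
      apply TrivSqZeroExt.ext
      · rw [fst_add, fst_inl, fst_inr, add_zero, fst_add, fst_add, fst_inl, fst_inr, add_zero,
          fst_add, fst_inl, fst_inr, add_zero, map_add]
      · rw [snd_add, snd_inl, snd_inr, zero_add, snd_add, snd_add, snd_inl, snd_inr, zero_add,
          snd_add, snd_inl, snd_inr, zero_add, map_add] }
  letI : Algebra K B := φ.toAlgebra
  let I : Ideal B := RingHom.ker (fstHom L L L)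
  have memI : ∀ x : B, x ∈ I ↔ fst x = 0 := fun x => Iff.rfl
  have hI : I ^ 2 = ⊥ := by
    rw [pow_two]
    refine le_bot_iff.mp ?_
    rw [Ideal.mul_le]
    intro x hx y hy
    rw [Ideal.mem_bot]
    apply TrivSqZeroExt.ext
    · rw [fst_mul, (memI x).mp hx, zero_mul, fst_zero]
    · rw [snd_mul, (memI x).mp hx, (memI y).mp hy, MulOpposite.op_zero, zero_smul, zero_smul,
        add_zero, snd_zero]
  have halg : ∀ a : K, algebraMap K (B ⧸ I) a = Ideal.Quotient.mk I (φ a) := fun _ => rfl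
  let g : L →ₐ[K] B ⧸ I :=
  { toRingHom := (Ideal.Quotient.mk I).comp (inlHom L L)
    commutes' := fun a => by
      show Ideal.Quotient.mk I (inl (algebraMap K L a)) = algebraMap K (B ⧸ I) a
      rw [halg, Ideal.Quotient.eq]
      refine (memI _).mpr ?_
      show fst (inl (algebraMap K L a) - (inl (algebraMap K L a) + inr (D a))) = 0
      simp only [fst_sub, fst_add, fst_inl, fst_inr, add_zero, sub_self] }
  let ℓ := Algebra.FormallySmooth.lift I ⟨2, hI⟩ g
  have hmk : ∀ x : L, Ideal.Quotient.mk I (ℓ x) = Ideal.Quotient.mk I (inl x) := by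
    intro x
    exact Algebra.FormallySmooth.mk_lift I _ g x
  have hfst : ∀ x : L, fst (ℓ x) = x := by
    intro x
    have h := (Ideal.Quotient.eq).mp (hmk x)
    have h0 := (memI _).mp h
    rw [fst_sub, fst_inl, sub_eq_zero] at h0
    exact h0
  let T : L →ₗ[ℤ] L := (AddMonoidHom.mk' (fun x : L => snd (ℓ x))
      (fun a b => by show snd (ℓ (a + b)) = snd (ℓ a) + snd (ℓ b); rw [map_add, snd_add])).toIntLinearMap
  refine ⟨{ toLinearMap := T
            map_one_eq_zero' := by
              show snd (ℓ 1) = 0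
              rw [map_one, snd_one]
            leibniz' := fun a b => by
              show snd (ℓ (a * b)) = a • snd (ℓ b) + b • snd (ℓ a)
              rw [map_mul, snd_mul, hfst, hfst, op_smul_eq_smul] }, ?_⟩
  intro a
  show snd (ℓ (algebraMap K L a)) = D a
  rw [ℓ.commutes]
  show snd (inl (algebraMap K L a) + inr (D a)) = D a
  rw [snd_add, snd_inl, snd_inr, zero_add]

section SepInjectivity

lemma mapEAA_injective_of_separable (E E' : Type) [Field E] [Field E'] [Algebra E E']
    [Algebra.IsSeparable E E'] (r : ℕ) :
    ∀ x ∈ ⋀[E]^r (Ω[E⁄ℤ]), mapEAA E E' x = 0 → x = 0 := by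
  classical
  letI : LinearOrder (Module.Basis.ofVectorSpaceIndex E (Ω[E⁄ℤ])) :=
    IsWellOrder.linearOrder WellOrderingRel
  let e := Module.Basis.ofVectorSpace E (Ω[E⁄ℤ])
  haveI := Algebra.FormallyEtale.of_isSeparable E E'
  have hD : ∀ i, ∃ D' : Derivation ℤ E' E', ∀ a : E,
      D' (algebraMap E E' a) = algebraMap E E' (e.coord i (KaehlerDifferential.D ℤ E a)) :=
    fun i => exists_derivation_extension E E'
      ((Algebra.linearMap E E').compDer ((e.coord i).compDer (KaehlerDifferential.D ℤ E)))
  choose Dext hDext using hD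
  let ψ : _ → (Ω[E'⁄ℤ] →ₗ[E'] E') := fun i => (Dext i).liftKaehlerDifferential
  have hcomm : ∀ i, ∀ w : Ω[E⁄ℤ], ψ i (mOm1 E E' w) = algebraMap E E' (e.coord i w) := by
    intro i
    have heq : (LinearMap.restrictScalars E (ψ i)).comp (mOm1 E E') =
        (Algebra.linearMap E E').comp (e.coord i) := by
      apply LinearMap.ext_on (KaehlerDifferential.span_range_derivation ℤ E)
      rintro _ ⟨a, rfl⟩
      show ψ i (mOm1 E E' (KaehlerDifferential.D ℤ E a)) = _
      rw [mOm1_D E E' a]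
      show (Dext i).liftKaehlerDifferential (KaehlerDifferential.D ℤ E' (algebraMap E E' a)) = _
      rw [Derivation.liftKaehlerDifferential_comp_D]
      exact hDext i a
    intro w
    exact LinearMap.congr_fun heq w
  have hψeq : ∀ i, ψ i (mOm1 E E' (e i)) = 1 := by
    intro i
    rw [hcomm i (e i), Module.Basis.coord_apply, Module.Basis.repr_self, Finsupp.single_eq_same, map_one]
  have hψne : ∀ i j, i ≠ j → ψ i (mOm1 E E' (e j)) = 0 := by
    intro i j h
    rw [hcomm i (e j), Module.Basis.coord_apply, Module.Basis.repr_self,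
      Finsupp.single_eq_of_ne h, map_zero]
  intro x hx h0
  exact mapEAA_injOn_power e ψ hψeq hψne r x hx h0

lemma pushHM_injective (E E' : Type) [Field E] [Field E'] (φ : E →+* E')
    (hsep : @Algebra.IsSeparable E E' _ _ φ.toAlgebra) (r : ℕ) :
    Function.Injective (pushHM φ (r : ℤ)) := by
  letI : Algebra E E' := φ.toAlgebra
  haveI : Algebra.IsSeparable E E' := hsep
  have hOm : Function.Injective (mapOmegaS E E' (r : ℤ)) := by
    intro x y hxy
    have hsub : (x : EA E) - y ∈ OmegaS E (r : ℤ) := Submodule.sub_mem _ x.2 y.2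
    have hpow : (x : EA E) - y ∈ ⋀[E]^r (Ω[E⁄ℤ]) := by
      simpa [OmegaS, Int.natCast_nonneg, Int.toNat_natCast] using hsub
    have hmapeq : mapEAA E E' ((x : EA E) - y) = 0 := by
      rw [map_sub, sub_eq_zero]
      exact Subtype.ext_iff.mp hxy
    exact Subtype.ext (sub_eq_zero.mp (mapEAA_injective_of_separable E E' r _ hpow hmapeq))
  intro x y hxy
  apply Subtype.ext
  apply hOm
  exact Subtype.ext_iff.mp hxy

end SepInjectivity

section Vanishing

lemma Hw_eq_zero (p : ℕ) (F : Type) [Field F] (m : ℕ)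
    (hsurj : ∀ c : F, ∃ α : F, α ^ p - α = c) (z : Hw p F (m : ℤ)) : z = 0 := by
  classical
  set S : Set (EA F) := {y | ∃ (a : F) (b : Fin m → Fˣ), y = logFormEA a b} with hS
  set G : AddSubgroup (EA F) := AddSubgroup.closure S with hG
  have hsmul : ∀ (c : F) (x : EA F), x ∈ G → c • x ∈ G := by
    intro c x hx
    have h1 : G ≤ G.comap (AddMonoidHom.mk' (fun y : EA F => c • y) (smul_add c)) := by
      rw [hG, AddSubgroup.closure_le]
      rintro y ⟨a, b, rfl⟩
      apply AddSubgroup.subset_closure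
      refine ⟨c * a, b, ?_⟩
      show c • logFormEA a b = logFormEA (c * a) b
      rw [logFormEA, logFormEA, smul_smul]
    exact h1 hx
  let GM : Submodule F (EA F) :=
    { G.toAddSubmonoid with smul_mem' := fun c {x} hx => hsmul c x hx }
  have hGmem : ∀ x : EA F, x ∈ GM → x ∈ G := fun x hx => hx
  have hGM : ∀ x : EA F, x ∈ ⋀[F]^m (Ω[F⁄ℤ]) → x ∈ G := by
    intro x hx
    rw [← ExteriorAlgebra.ιMulti_span_fixedDegree] at hx
    refine hGmem x (Submodule.span_le.mpr ?_ hx)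
    rintro _ ⟨v, rfl⟩
    apply multilinear_mem_span_aux (ExteriorAlgebra.ιMulti F m).toMultilinearMap
      {w : Ω[F⁄ℤ] | ∃ u : Fˣ, w = dlogF u} GM
    · intro w hw
      choose u hu using hw
      have hwe : (ExteriorAlgebra.ιMulti F m).toMultilinearMap w = logFormEA 1 u := by
        rw [logFormEA, one_smul]
        show ExteriorAlgebra.ιMulti F m w = _
        congr 1
        exact funext fun k => hu k
      rw [hwe]
      exact AddSubgroup.subset_closure ⟨1, u, rfl⟩
    · intro k
      have hspan : Submodule.span F {w : Ω[F⁄ℤ] | ∃ u : Fˣ, w = dlogF u} = ⊤ := by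
        rw [eq_top_iff, ← KaehlerDifferential.span_range_derivation ℤ F]
        refine Submodule.span_le.mpr ?_
        rintro _ ⟨a, rfl⟩
        by_cases ha : a = 0
        · subst ha
          rw [map_zero]
          exact Submodule.zero_mem _
        · have hda : KaehlerDifferential.D ℤ F a = a • dlogF (Units.mk0 a ha) := by
            rw [dlogF]
            show _ = a • (((Units.mk0 a ha)⁻¹ : Fˣ) : F) • KaehlerDifferential.D ℤ F a
            rw [smul_smul]
            norm_num [mul_inv_cancel₀ ha]
          rw [hda]
          exact Submodule.smul_mem _ a
            (Submodule.subset_span ⟨Units.mk0 a ha, rfl⟩)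
      rw [hspan]
      exact Submodule.mem_top
  have hG_le : G ≤ (Hsub p F (m : ℤ)).map ((OmegaS F (m : ℤ)).subtype.toAddMonoidHom) := by
    rw [hG, AddSubgroup.closure_le]
    rintro y ⟨a, b, rfl⟩
    obtain ⟨α, hα⟩ := hsurj a
    rw [SetLike.mem_coe, AddSubgroup.mem_map]
    refine ⟨⟨logFormEA a b, logFormEA_mem a b⟩, ?_, rfl⟩
    apply AddSubgroup.subset_closure
    right
    exact ⟨Int.natCast_nonneg m, α, b, by rw [hα]⟩
  induction z using QuotientAddGroup.induction_on with
  | H y =>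
    show (QuotientAddGroup.mk y : ↥(OmegaS F (m : ℤ)) ⧸ Hsub p F (m : ℤ)) = 0
    rw [QuotientAddGroup.eq_zero_iff]
    have hy : (y : EA F) ∈ ⋀[F]^m (Ω[F⁄ℤ]) := by
      simpa [OmegaS, Int.natCast_nonneg, Int.toNat_natCast] using y.2
    have hmem := hG_le (hGM _ hy)
    rw [AddSubgroup.mem_map] at hmem
    obtain ⟨w, hw, hwy⟩ := hmem
    have : w = y := Subtype.ext hwy
    rwa [this] at hw

end Vanishing

section ASRoots

lemma AS_surjective (p : ℕ) [Fact p.Prime] (F : Type) [Field F] [CharP F p] [IsSepClosed F] :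
    ∀ c : F, ∃ α : F, α ^ p - α = c := by
  intro c
  classical
  set f : Polynomial F := Polynomial.X ^ p - (Polynomial.X + Polynomial.C c) with hf
  have hp2 : 1 < p := (Fact.out : p.Prime).one_lt
  have hdeg : f.degree = p := by
    rw [hf, Polynomial.degree_sub_eq_left_of_degree_lt, Polynomial.degree_X_pow]
    rw [Polynomial.degree_X_add_C, Polynomial.degree_X_pow]
    exact_mod_cast hp2
  have hder : Polynomial.derivative f = -1 := by
    rw [hf]
    simp [CharP.cast_eq_zero F p, Polynomial.derivative_X_pow]
  have hsep : f.Separable := by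
    rw [Polynomial.separable_def, hder]
    exact IsCoprime.neg_right isCoprime_one_right
  have hd0 : f.degree ≠ 0 := by
    rw [hdeg]
    exact_mod_cast (by omega : p ≠ 0)
  obtain ⟨α, hα⟩ := IsSepClosed.exists_root f hd0 hsep
  refine ⟨α, ?_⟩
  rw [Polynomial.IsRoot, hf] at hα
  simp only [Polynomial.eval_sub, Polynomial.eval_add, Polynomial.eval_pow, Polynomial.eval_X,
    Polynomial.eval_C] at hα
  rw [sub_eq_zero] at hα
  rw [hα]
  ring

end ASRoots


/-- Every operation `H^{m+1,m} → H^{r,r}` on fields over a field `k` of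
characteristic `p > 0` is constant; in particular every normalized such operation is
zero. -/
theorem stmt19 (p : ℕ) [Fact p.Prime] (k : Type) [Field k] [CharP k p] (m r : ℕ)
    (θ : ∀ (E : Type) [Field E] [Algebra k E], Hw p E (m : ℤ) → ↥(HMsub E (r : ℤ)))
    (hθ : ∀ (E E' : Type) [Field E] [Algebra k E] [Field E'] [Algebra k E']
        (σ : E →ₐ[k] E') (x : Hw p E (m : ℤ)),
      θ E' (pushHw p σ.toRingHom (m : ℤ) x) = pushHM σ.toRingHom (r : ℤ) (θ E x)) :
    (∃ c : ↥(HMsub k (r : ℤ)), ∀ (E : Type) [Field E] [Algebra k E] (x : Hw p E (m : ℤ)),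
      θ E x = pushHM (algebraMap k E) (r : ℤ) c) ∧
    ((∀ (E : Type) [Field E] [Algebra k E], θ E 0 = 0) →
      ∀ (E : Type) [Field E] [Algebra k E] (x : Hw p E (m : ℤ)), θ E x = 0) := by
  have key : ∀ (E : Type) [Field E] [Algebra k E] (x : Hw p E (m : ℤ)), θ E x = θ E 0 := by
    intro E _ _ x
    haveI : CharP E p := charP_of_injective_algebraMap (algebraMap k E).injective p
    let Ebar := AlgebraicClosure E
    let E' : Type := ↥(separableClosure E Ebar)
    haveI : IsSepClosed E' := (separableClosure.isSepClosure E Ebar).sep_closed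
    haveI : CharP E' p := charP_of_injective_algebraMap (algebraMap E E').injective p
    letI : Algebra k E' := ((algebraMap E E').comp (algebraMap k E)).toAlgebra
    let σ : E →ₐ[k] E' := { toRingHom := algebraMap E E', commutes' := fun _ => rfl }
    have hker := Hw_eq_zero p E' m (AS_surjective p E')
    have h1 := hθ E E' σ x
    have h2 := hθ E E' σ 0
    rw [hker (pushHw p σ.toRingHom (m : ℤ) x)] at h1
    rw [hker (pushHw p σ.toRingHom (m : ℤ) 0)] at h2
    have hAeq : (σ.toRingHom).toAlgebra = (inferInstance : Algebra E E') :=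
      Algebra.algebra_ext _ _ (fun _ => rfl)
    have hsep : @Algebra.IsSeparable E E' _ _ (σ.toRingHom.toAlgebra) := by
      rw [hAeq]
      exact separableClosure.isSeparable E Ebar
    exact pushHM_injective E E' σ.toRingHom hsep r (h1.symm.trans h2)
  constructor
  · refine ⟨θ k 0, ?_⟩
    intro E _ _ x
    rw [key E x]
    have h := hθ k E (Algebra.ofId k E) 0
    rw [map_zero] at h
    exact h
  · intro hnorm E _ _ x
    rw [key E x, hnorm E]
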